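/- Let (V, ⟨·,·⟩) be a finite-dimensional real inner product space and R : V × V × V → V a trilinear map satisfying the curvature symmetries ⟨R(X,Y)Z,W⟩ = −⟨R(Y,X)Z,W⟩ = −⟨R(X,Y)W,Z⟩ and ⟨R(X,Y)Z,W⟩ = ⟨R(Z,W)X,Y⟩ for all X,Y,Z,W ∈ V. Assume R has strictly negative sectional curvature, i.e. ⟨R(X,Y)Y,X⟩ < 0 whenever X, Y ∈ V are linearly independent. Let (g^{ij}) be a symmetric positive definite real n×n matrix, τ ∈ V, and X₁,…,Xₙ ∈ V with Σ_{i,j} g^{ij} ⟨R(X_i, τ)τ, X_j⟩ = 0. Then either τ = 0 or every X_i lies in the span of τ; in particular, if the span of {X₁,…,Xₙ} has dimension at least 2, then τ = 0. (This is the pointwise step in the proof that a biharmonic map of constant tension norm and rank ≥ 2 into a target of strictly negative sectional curvature is harmonic.) -/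

import Mathlib

open scoped RealInnerProductSpace BigOperators
open Matrix
open scoped MatrixOrder

lemma psd_trace_zero_eq_zero {n : ℕ} {N : Matrix (Fin n) (Fin n) ℝ}
    (hN : N.PosSemidef) (ht : N.trace = 0) : N = 0 := by
  obtain ⟨B, rfl⟩ : ∃ B : Matrix (Fin n) (Fin n) ℝ, N = Bᴴ * B := by
    obtain ⟨B, hB⟩ := CStarAlgebra.nonneg_iff_eq_star_mul_self.mp hN.nonneg
    exact ⟨B, hB⟩
  have hB : B = 0 := by
    have htr : (Bᴴ * B).trace = ∑ i, ∑ j, B j i * B j i := by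
      simp [Matrix.trace, Matrix.mul_apply, Matrix.diag, Matrix.conjTranspose_apply]
    rw [htr] at ht
    have h0 : ∀ i ∈ Finset.univ, (0:ℝ) ≤ ∑ j, B j i * B j i := fun i _ =>
      Finset.sum_nonneg fun j _ => mul_self_nonneg _
    have := (Finset.sum_eq_zero_iff_of_nonneg h0).mp ht
    ext j i
    have hi := this i (Finset.mem_univ i)
    have h0' : ∀ j ∈ Finset.univ, (0:ℝ) ≤ B j i * B j i := fun j _ => mul_self_nonneg _
    have := (Finset.sum_eq_zero_iff_of_nonneg h0').mp hi j (Finset.mem_univ j)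
    simpa using mul_self_eq_zero.mp this
  simp [hB]

lemma psd_pd_pairing_zero {n : ℕ} {g M : Matrix (Fin n) (Fin n) ℝ}
    (hpd : g.PosDef) (hM : M.PosSemidef)
    (h : ∑ i, ∑ j, g i j * M j i = 0) : M = 0 := by
  have hg := hpd.posSemidef
  set S := CFC.sqrt g with hSdef
  have hSps : S.PosSemidef := (CFC.sqrt_nonneg g).posSemidef
  have hSH : Sᴴ = S := hSps.isHermitian
  have hN : (S * M * S).PosSemidef := by
    have := hM.mul_mul_conjTranspose_same S
    rwa [hSH] at this
  have htr : (S * M * S).trace = 0 := by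
    have h1 : (S * M * S).trace = (g * M).trace := by
      rw [Matrix.trace_mul_cycle, hSdef, CFC.sqrt_mul_sqrt_self g hg.nonneg]
    rw [h1]
    simpa [Matrix.trace, Matrix.diag, Matrix.mul_apply] using h
  have hN0 : S * M * S = 0 := psd_trace_zero_eq_zero hN htr
  -- S is invertible since det g ≠ 0
  have hdet : IsUnit S.det := by
    have : S.det * S.det = g.det := by rw [← Matrix.det_mul, CFC.sqrt_mul_sqrt_self g hg.nonneg]
    have hg0 : g.det ≠ 0 := ne_of_gt hpd.det_pos
    exact isUnit_iff_ne_zero.mpr (fun h0 => hg0 (by rw [← this, h0, mul_zero]))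
  have h1 : S⁻¹ * (S * M * S) * S⁻¹ = M := by
    rw [Matrix.mul_assoc S M S, ← Matrix.mul_assoc S⁻¹ S (M * S),
      Matrix.nonsing_inv_mul _ hdet, Matrix.one_mul, Matrix.mul_assoc M S S⁻¹,
      Matrix.mul_nonsing_inv _ hdet, Matrix.mul_one]
  rw [← h1, hN0, Matrix.mul_zero, Matrix.zero_mul]

theorem curvature_term_zero_of_neg_curvature {V : Type*} [NormedAddCommGroup V]
    [InnerProductSpace ℝ V] [FiniteDimensional ℝ V]
    (R : V →ₗ[ℝ] V →ₗ[ℝ] V →ₗ[ℝ] V)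
    (hskew₁ : ∀ X Y Z W : V, ⟪R X Y Z, W⟫ = -⟪R Y X Z, W⟫)
    (hskew₂ : ∀ X Y Z W : V, ⟪R X Y Z, W⟫ = -⟪R X Y W, Z⟫)
    (hpair : ∀ X Y Z W : V, ⟪R X Y Z, W⟫ = ⟪R Z W X, Y⟫)
    (hsec : ∀ X Y : V, LinearIndependent ℝ ![X, Y] → ⟪R X Y Y, X⟫ < 0)
    {n : ℕ} (g : Matrix (Fin n) (Fin n) ℝ) (hsymm : g.IsSymm) (hpd : g.PosDef)
    (τ : V) (X : Fin n → V)
    (hzero : ∑ i, ∑ j, g i j * ⟪R (X i) τ τ, X j⟫ = 0) :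
    (τ = 0 ∨ ∀ i, X i ∈ Submodule.span ℝ ({τ} : Set V)) ∧
      (2 ≤ Module.finrank ℝ (Submodule.span ℝ (Set.range X)) → τ = 0) := by
  -- q(u,v) := ⟪R u τ τ, v⟫ is symmetric
  have qsymm : ∀ u v : V, ⟪R u τ τ, v⟫ = ⟪R v τ τ, u⟫ := by
    intro u v
    rw [hpair u τ τ v, hskew₁ τ v u τ, hskew₂ v τ u τ]
    ring
  -- q(v,v) ≤ 0 always
  have qnonpos : ∀ v : V, ⟪R v τ τ, v⟫ ≤ 0 := by
    intro v
    by_cases hind : LinearIndependent ℝ ![v, τ]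
    · exact le_of_lt (hsec v τ hind)
    · rw [LinearIndependent.pair_iff] at hind
      push_neg at hind
      obtain ⟨s, t, hst, hne⟩ := hind
      by_cases hs : s = 0
      · subst hs
        simp only [zero_smul, zero_add] at hst
        have ht : t ≠ 0 := fun h => hne rfl (by simpa [h] using hst)
        have hτ : τ = 0 := by
          have := smul_eq_zero.mp hst
          tauto
        simp [hτ]
      · have h1 : s • v = -(t • τ) := by linear_combination (norm := module) hst
        have h2 : v = s⁻¹ • (s • v) := by rw [smul_smul, inv_mul_cancel₀ hs, one_smul]
        have hv : v = (s⁻¹ * -t) • τ := by rw [h2, h1]; module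
        have hRτ : ⟪R τ τ τ, τ⟫ = 0 := by
          have := hskew₁ τ τ τ τ
          linarith
        rw [hv]
        simp [real_inner_smul_left, real_inner_smul_right, _root_.map_smul, hRτ]
  -- if τ ≠ 0 and q(v,v) = 0 then v ∈ span {τ}
  have qzero : τ ≠ 0 → ∀ v : V, ⟪R v τ τ, v⟫ = 0 → v ∈ Submodule.span ℝ ({τ} : Set V) := by
    intro hτ v hq
    by_contra hvs
    have hind : LinearIndependent ℝ ![v, τ] := by
      rw [LinearIndependent.pair_iff]
      intro s t hst
      by_cases hs : s = 0
      · subst hs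
        simp only [zero_smul, zero_add] at hst
        rcases smul_eq_zero.mp hst with h | h
        · exact ⟨rfl, h⟩
        · exact absurd h hτ
      · exfalso
        apply hvs
        have h1 : s • v = -(t • τ) := by linear_combination (norm := module) hst
        have h2 : v = s⁻¹ • (s • v) := by rw [smul_smul, inv_mul_cancel₀ hs, one_smul]
        have hv : v = (s⁻¹ * -t) • τ := by rw [h2, h1]; module
        rw [hv]
        exact Submodule.smul_mem _ _ (Submodule.mem_span_singleton_self τ)
    exact absurd hq (ne_of_lt (hsec v τ hind))
  -- the matrix M i j = -⟪R (X i) τ τ, X j⟫ is PSD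
  set M : Matrix (Fin n) (Fin n) ℝ := Matrix.of fun i j => -⟪R (X i) τ τ, X j⟫ with hMdef
  have hMsym : ∀ i j, M i j = M j i := by
    intro i j; simp only [hMdef, Matrix.of_apply]; rw [qsymm]
  have hMpsd : M.PosSemidef := by
    refine Matrix.PosSemidef.of_dotProduct_mulVec_nonneg ?_ ?_
    · ext i j
      simp only [Matrix.conjTranspose_apply, star_trivial]
      exact (hMsym j i)
    · intro x
      have hexp : ⟪R (∑ i, x i • X i) τ τ, ∑ j, x j • X j⟫
          = ∑ i, ∑ j, x i * x j * ⟪R (X i) τ τ, X j⟫ := by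
        simp only [map_sum, LinearMap.sum_apply, _root_.map_smul, LinearMap.smul_apply,
          sum_inner, inner_sum, real_inner_smul_left, real_inner_smul_right]
        refine Finset.sum_congr rfl fun i _ => Finset.sum_congr rfl fun j _ => ?_
        rw [qsymm]
        ring
      have hle := qnonpos (∑ i, x i • X i)
      rw [hexp] at hle
      have hthis : x ⬝ᵥ M.mulVec x = -∑ i, ∑ j, x i * x j * ⟪R (X i) τ τ, X j⟫ := by
        simp only [dotProduct, Matrix.mulVec, hMdef, Matrix.of_apply, Finset.mul_sum]
        simp_rw [← Finset.sum_neg_distrib]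
        exact Finset.sum_congr rfl fun i _ => Finset.sum_congr rfl fun j _ => by ring
      rw [star_trivial, hthis]
      linarith
  -- the hypothesis gives ∑ g i j * M j i = 0
  have hsum : ∑ i, ∑ j, g i j * M j i = 0 := by
    have heach : ∀ i j, g i j * M j i = -(g i j * ⟪R (X i) τ τ, X j⟫) := by
      intro i j
      simp only [hMdef, Matrix.of_apply]
      rw [qsymm (X j) (X i)]
      ring
    simp_rw [heach, Finset.sum_neg_distrib]
    rw [hzero, neg_zero]
  have hM0 : M = 0 := psd_pd_pairing_zero hpd hMpsd hsum
  have hdiag : ∀ i, ⟪R (X i) τ τ, X i⟫ = 0 := by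
    intro i
    have : M i i = 0 := by rw [hM0]; rfl
    simp only [hMdef, Matrix.of_apply, neg_eq_zero] at this
    exact this
  constructor
  · by_cases hτ : τ = 0
    · exact Or.inl hτ
    · exact Or.inr fun i => qzero hτ (X i) (hdiag i)
  · intro hrank
    by_contra hτ
    have hall : ∀ i, X i ∈ Submodule.span ℝ ({τ} : Set V) :=
      fun i => qzero hτ (X i) (hdiag i)
    have hle : Submodule.span ℝ (Set.range X) ≤ Submodule.span ℝ ({τ} : Set V) := by
      rw [Submodule.span_le]
      rintro _ ⟨i, rfl⟩
      exact hall i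
    have h1 : Module.finrank ℝ (Submodule.span ℝ (Set.range X))
        ≤ Module.finrank ℝ (Submodule.span ℝ ({τ} : Set V)) :=
      Submodule.finrank_mono hle
    have h2 : Module.finrank ℝ (Submodule.span ℝ ({τ} : Set V)) = 1 := by
      simpa using finrank_span_singleton hτ
    omega
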